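/- For each t ∈ {0,1,…,T} and each k ∈ ℕ, the single-system value function Ṽ_t(x,k) is non-decreasing in the deterioration level x: if x ≤ x' then Ṽ_t(x,k) ≤ Ṽ_t(x',k). -/

import Mathlib

open Filter

/-- Negative Binomial pmf with real shape `r` and success probability `p`:
`NB(r,p)(z) = Γ(z+r)/(Γ(r)·z!)·p^r·(1−p)^z` for `r > 0`, and `NB(0,p)` is
the point mass at `0`. -/
noncomputable def NB (r p : ℝ) (z : ℕ) : ℝ :=
  if r = 0 then (if z = 0 then (1 : ℝ) else 0)
  else Real.Gamma ((z : ℝ) + r) / (Real.Gamma r * (Nat.factorial z : ℝ)) * p ^ r * (1 - p) ^ z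

/-- `p_t = (β0 + N·t)/(β0 + N·t + 1)`. -/
noncomputable def pt (β0 : ℝ) (N t : ℕ) : ℝ :=
  (β0 + (N : ℝ) * (t : ℝ)) / (β0 + (N : ℝ) * (t : ℝ) + 1)

/-- Expectation `E_{(Z,K)}[f(Z,K)]` with `Z ~ NB(α0+k, p_t)` and
`K ~ NB((N−1)(α0+k), p_t)` independent. -/
noncomputable def EZK (α0 β0 : ℝ) (N t k : ℕ) (f : ℕ → ℕ → ℝ) : ℝ :=
  ∑' z : ℕ, ∑' κ : ℕ,
    NB (α0 + (k : ℝ)) (pt β0 N t) z * NB (((N : ℝ) - 1) * (α0 + (k : ℝ))) (pt β0 N t) κ * f z κ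


open MeasureTheory Set

lemma gammaIntegrable {s c : ℝ} (hs : 0 < s) (hc : 0 < c) :
    IntegrableOn (fun t : ℝ => t ^ (s - 1) * Real.exp (-(c * t))) (Ioi (0:ℝ)) := by
  by_contra h
  have h0 := MeasureTheory.integral_undef h
  rw [Real.integral_rpow_mul_exp_neg_mul_Ioi hs hc] at h0
  have : (0:ℝ) < (1 / c) ^ s * Real.Gamma s := by positivity
  linarith [this, h0.ge, h0.le]

lemma NB_nonneg {r p : ℝ} (hr : 0 ≤ r) (hp0 : 0 < p) (hp1 : p < 1) (z : ℕ) :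
    0 ≤ NB r p z := by
  unfold NB
  split_ifs with h1 h2
  · norm_num
  · norm_num
  · have hr' : 0 < r := lt_of_le_of_ne hr (Ne.symm h1)
    have h1 : 0 < Real.Gamma ((z : ℝ) + r) := Real.Gamma_pos_of_pos (by positivity)
    have h2 : 0 < Real.Gamma r := Real.Gamma_pos_of_pos hr'
    have : (0:ℝ) < 1 - p := by linarith
    positivity

lemma NB_eq_integral {r p : ℝ} (hr : 0 < r) (hp0 : 0 < p) (hp1 : p < 1) (z : ℕ) :
    NB r p z = (p / (1 - p)) ^ r / (Real.Gamma r * (Nat.factorial z : ℝ)) *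
      ∫ t : ℝ in Ioi 0, t ^ (((z : ℝ) + r) - 1) * Real.exp (-((1 - p)⁻¹ * t)) := by
  have hq : (0:ℝ) < 1 - p := by linarith
  have hzr : (0:ℝ) < (z : ℝ) + r := by positivity
  rw [Real.integral_rpow_mul_exp_neg_mul_Ioi hzr (by positivity)]
  rw [one_div, inv_inv]
  have hqr : (1 - p) ^ ((z : ℝ) + r) = (1 - p) ^ z * (1 - p) ^ r := by
    rw [Real.rpow_add hq, Real.rpow_natCast]
  have hpq : (p / (1 - p)) ^ r * (1 - p) ^ r = p ^ r := by
    rw [← Real.mul_rpow (by positivity) hq.le, div_mul_cancel₀ _ hq.ne']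
  unfold NB
  rw [if_neg hr.ne', hqr, ← hpq]
  ring

lemma NB_sum_range_le {r p : ℝ} (hr : 0 < r) (hp0 : 0 < p) (hp1 : p < 1) (n : ℕ) :
    ∑ z ∈ Finset.range n, NB r p z ≤ 1 := by
  have hq : (0:ℝ) < 1 - p := by linarith
  have hΓ : 0 < Real.Gamma r := Real.Gamma_pos_of_pos hr
  have hpq : (0:ℝ) < p / (1 - p) := by positivity
  set q : ℝ := 1 - p with hqdef
  have hint : ∀ z : ℕ, IntegrableOn
      (fun t : ℝ => (p / q) ^ r / (Real.Gamma r * (Nat.factorial z : ℝ)) *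
        (t ^ (((z : ℝ) + r) - 1) * Real.exp (-(q⁻¹ * t)))) (Ioi (0:ℝ)) := by
    intro z
    exact (gammaIntegrable (by positivity) (by positivity)).const_mul _
  have hgint : IntegrableOn
      (fun t : ℝ => (p / q) ^ r / Real.Gamma r * (t ^ (r - 1) * Real.exp (-((p / q) * t))))
      (Ioi (0:ℝ)) := (gammaIntegrable hr hpq).const_mul _
  have sumInt : ∑ z ∈ Finset.range n, NB r p z =
      ∫ t : ℝ in Ioi 0, ∑ z ∈ Finset.range n,
        (p / q) ^ r / (Real.Gamma r * (Nat.factorial z : ℝ)) *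
          (t ^ (((z : ℝ) + r) - 1) * Real.exp (-(q⁻¹ * t))) := by
    rw [MeasureTheory.integral_finset_sum _ (fun z _ => hint z)]
    refine Finset.sum_congr rfl fun z _ => ?_
    rw [NB_eq_integral hr hp0 hp1 z, ← MeasureTheory.integral_const_mul]
  have key : ∀ t ∈ Ioi (0:ℝ), ∑ z ∈ Finset.range n,
      (p / q) ^ r / (Real.Gamma r * (Nat.factorial z : ℝ)) *
        (t ^ (((z : ℝ) + r) - 1) * Real.exp (-(q⁻¹ * t))) ≤
      (p / q) ^ r / Real.Gamma r * (t ^ (r - 1) * Real.exp (-((p / q) * t))) := by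
    intro t ht
    have ht' : (0:ℝ) < t := ht
    have h1 : ∀ z : ℕ, t ^ (((z : ℝ) + r) - 1) = t ^ z * t ^ (r - 1) := by
      intro z
      rw [← Real.rpow_natCast t z, ← Real.rpow_add ht']
      ring_nf
    have h2 : Real.exp (-(q⁻¹ * t)) = Real.exp (-((p / q) * t)) * Real.exp (-t) := by
      rw [← Real.exp_add]
      congr 1
      have hq' : q⁻¹ = p / q + 1 := by
        rw [hqdef, div_add_one (by linarith : (0:ℝ) < 1 - p).ne']; ring
      rw [hq']; ring
    have hE : Real.exp (-t) * Real.exp t = 1 := by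
      rw [← Real.exp_add, neg_add_cancel, Real.exp_zero]
    calc ∑ z ∈ Finset.range n,
        (p / q) ^ r / (Real.Gamma r * (Nat.factorial z : ℝ)) *
          (t ^ (((z : ℝ) + r) - 1) * Real.exp (-(q⁻¹ * t)))
        = ((p / q) ^ r / Real.Gamma r * (t ^ (r - 1) * Real.exp (-((p / q) * t)) *
            Real.exp (-t))) * ∑ z ∈ Finset.range n, t ^ z / (Nat.factorial z : ℝ) := by
          rw [Finset.mul_sum]
          refine Finset.sum_congr rfl fun z _ => ?_
          rw [h1, h2]; ring
      _ ≤ ((p / q) ^ r / Real.Gamma r * (t ^ (r - 1) * Real.exp (-((p / q) * t)) *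
            Real.exp (-t))) * Real.exp t := by
          have hnn : 0 ≤ (p / q) ^ r / Real.Gamma r * (t ^ (r - 1) *
              Real.exp (-((p / q) * t)) * Real.exp (-t)) := by positivity
          exact mul_le_mul_of_nonneg_left (Real.sum_le_exp_of_nonneg ht'.le n) hnn
      _ = (p / q) ^ r / Real.Gamma r * (t ^ (r - 1) * Real.exp (-((p / q) * t))) := by
          linear_combination ((p / q) ^ r / Real.Gamma r * (t ^ (r - 1) *
            Real.exp (-((p / q) * t)))) * hE
  have gval : ∫ t : ℝ in Ioi 0,
      (p / q) ^ r / Real.Gamma r * (t ^ (r - 1) * Real.exp (-((p / q) * t))) = 1 := by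
    rw [MeasureTheory.integral_const_mul, Real.integral_rpow_mul_exp_neg_mul_Ioi hr hpq]
    have h1 : (q / p) ^ r * (p / q) ^ r = 1 := by
      rw [← Real.mul_rpow (by positivity) (by positivity),
        div_mul_div_comm, mul_comm q p, div_self (by positivity), Real.one_rpow]
    field_simp
    linear_combination h1
  calc ∑ z ∈ Finset.range n, NB r p z
      = _ := sumInt
    _ ≤ ∫ t : ℝ in Ioi 0, (p / q) ^ r / Real.Gamma r *
          (t ^ (r - 1) * Real.exp (-((p / q) * t))) :=
        MeasureTheory.setIntegral_mono_on
          (MeasureTheory.integrable_finset_sum _ (fun z _ => hint z)) hgint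
          measurableSet_Ioi key
    _ = 1 := gval

lemma NB_summable {r p : ℝ} (hr : 0 ≤ r) (hp0 : 0 < p) (hp1 : p < 1) :
    Summable (NB r p) := by
  rcases hr.eq_or_lt with h | h
  · refine summable_of_ne_finset_zero (s := {0}) fun z hz => ?_
    simp only [Finset.mem_singleton] at hz
    simp [NB, ← h, hz]
  · exact summable_of_sum_range_le (NB_nonneg hr hp0 hp1) (NB_sum_range_le h hp0 hp1)

lemma NB_tsum_le_one {r p : ℝ} (hr : 0 ≤ r) (hp0 : 0 < p) (hp1 : p < 1) :
    ∑' z, NB r p z ≤ 1 := by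
  rcases hr.eq_or_lt with h | h
  · rw [tsum_eq_single 0 (fun z hz => by simp [NB, ← h, hz])]
    simp [NB, ← h]
  · exact Real.tsum_le_of_sum_range_le (NB_nonneg hr hp0 hp1) (NB_sum_range_le h hp0 hp1)

lemma pt_pos {β0 : ℝ} (hβ0 : 0 < β0) (N t : ℕ) : 0 < pt β0 N t := by
  unfold pt
  have h1 : (0:ℝ) < β0 + (N : ℝ) * (t : ℝ) := by positivity
  have h2 : (0:ℝ) < β0 + (N : ℝ) * (t : ℝ) + 1 := by linarith
  positivity

lemma pt_lt_one {β0 : ℝ} (hβ0 : 0 < β0) (N t : ℕ) : pt β0 N t < 1 := by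
  unfold pt
  have h1 : (0:ℝ) < β0 + (N : ℝ) * (t : ℝ) := by positivity
  rw [div_lt_one (by linarith)]
  linarith

section Tsum2

variable {w v : ℕ → ℝ} {f g : ℕ → ℕ → ℝ} {M : ℝ}

lemma tsum2_le_const (hw : ∀ z, 0 ≤ w z) (hv : ∀ κ, 0 ≤ v κ)
    (hws : Summable w) (hvs : Summable v)
    (hw1 : ∑' z, w z ≤ 1) (hv1 : ∑' κ, v κ ≤ 1)
    (hf0 : ∀ z κ, 0 ≤ f z κ) (hfM : ∀ z κ, f z κ ≤ M) (hM0 : 0 ≤ M) :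
    (∑' z, ∑' κ, w z * v κ * f z κ) ≤ M := by
  have hMs : ∀ z : ℕ, Summable (fun κ => w z * v κ * M) := fun z =>
    (hvs.mul_left (w z)).mul_right M
  have hSf : ∀ z : ℕ, Summable (fun κ => w z * v κ * f z κ) := fun z =>
    Summable.of_nonneg_of_le
      (fun κ => mul_nonneg (mul_nonneg (hw z) (hv κ)) (hf0 z κ))
      (fun κ => mul_le_mul_of_nonneg_left (hfM z κ) (mul_nonneg (hw z) (hv κ)))
      (hMs z)
  have hinner : ∀ z : ℕ, (∑' κ, w z * v κ * f z κ) ≤ w z * M := by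
    intro z
    calc (∑' κ, w z * v κ * f z κ) ≤ ∑' κ, w z * v κ * M :=
          Summable.tsum_le_tsum
            (fun κ => mul_le_mul_of_nonneg_left (hfM z κ) (mul_nonneg (hw z) (hv κ)))
            (hSf z) (hMs z)
      _ = w z * (∑' κ, v κ) * M := by rw [tsum_mul_right, tsum_mul_left]
      _ ≤ w z * 1 * M :=
          mul_le_mul_of_nonneg_right (mul_le_mul_of_nonneg_left hv1 (hw z)) hM0
      _ = w z * M := by ring
  have houter : Summable (fun z => ∑' κ, w z * v κ * f z κ) :=
    Summable.of_nonneg_of_le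
      (fun z => tsum_nonneg fun κ => mul_nonneg (mul_nonneg (hw z) (hv κ)) (hf0 z κ))
      hinner (hws.mul_right M)
  calc (∑' z, ∑' κ, w z * v κ * f z κ) ≤ ∑' z, w z * M :=
        Summable.tsum_le_tsum hinner houter (hws.mul_right M)
    _ = (∑' z, w z) * M := tsum_mul_right
    _ ≤ 1 * M := mul_le_mul_of_nonneg_right hw1 hM0
    _ = M := one_mul M

lemma tsum2_le_tsum2 (hw : ∀ z, 0 ≤ w z) (hv : ∀ κ, 0 ≤ v κ)
    (hws : Summable w) (hvs : Summable v)
    (hf0 : ∀ z κ, 0 ≤ f z κ) (hfg : ∀ z κ, f z κ ≤ g z κ)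
    (hgM : ∀ z κ, g z κ ≤ M) :
    (∑' z, ∑' κ, w z * v κ * f z κ) ≤ ∑' z, ∑' κ, w z * v κ * g z κ := by
  have hg0 : ∀ z κ, 0 ≤ g z κ := fun z κ => (hf0 z κ).trans (hfg z κ)
  have hM0 : 0 ≤ M := (hg0 0 0).trans (hgM 0 0)
  have hMs : ∀ z : ℕ, Summable (fun κ => w z * v κ * M) := fun z =>
    (hvs.mul_left (w z)).mul_right M
  have hSg : ∀ z : ℕ, Summable (fun κ => w z * v κ * g z κ) := fun z =>
    Summable.of_nonneg_of_le
      (fun κ => mul_nonneg (mul_nonneg (hw z) (hv κ)) (hg0 z κ))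
      (fun κ => mul_le_mul_of_nonneg_left (hgM z κ) (mul_nonneg (hw z) (hv κ)))
      (hMs z)
  have hSf : ∀ z : ℕ, Summable (fun κ => w z * v κ * f z κ) := fun z =>
    Summable.of_nonneg_of_le
      (fun κ => mul_nonneg (mul_nonneg (hw z) (hv κ)) (hf0 z κ))
      (fun κ => mul_le_mul_of_nonneg_left ((hfg z κ).trans (hgM z κ))
        (mul_nonneg (hw z) (hv κ)))
      (hMs z)
  have hinnerle : ∀ z : ℕ, (∑' κ, w z * v κ * f z κ) ≤ ∑' κ, w z * v κ * g z κ := fun z =>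
    Summable.tsum_le_tsum
      (fun κ => mul_le_mul_of_nonneg_left (hfg z κ) (mul_nonneg (hw z) (hv κ)))
      (hSf z) (hSg z)
  have hinnerg : ∀ z : ℕ, (∑' κ, w z * v κ * g z κ) ≤ w z * ((∑' κ, v κ) * M) := by
    intro z
    calc (∑' κ, w z * v κ * g z κ) ≤ ∑' κ, w z * v κ * M :=
          Summable.tsum_le_tsum
            (fun κ => mul_le_mul_of_nonneg_left (hgM z κ) (mul_nonneg (hw z) (hv κ)))
            (hSg z) (hMs z)
      _ = w z * (∑' κ, v κ) * M := by rw [tsum_mul_right, tsum_mul_left]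
      _ = w z * ((∑' κ, v κ) * M) := by ring
  have hOg : Summable (fun z => ∑' κ, w z * v κ * g z κ) :=
    Summable.of_nonneg_of_le
      (fun z => tsum_nonneg fun κ => mul_nonneg (mul_nonneg (hw z) (hv κ)) (hg0 z κ))
      hinnerg (hws.mul_right _)
  have hOf : Summable (fun z => ∑' κ, w z * v κ * f z κ) :=
    Summable.of_nonneg_of_le
      (fun z => tsum_nonneg fun κ => mul_nonneg (mul_nonneg (hw z) (hv κ)) (hf0 z κ))
      hinnerle hOg
  exact Summable.tsum_le_tsum hinnerle hOf hOg

end Tsum2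

section EZKlem

variable {α0 β0 : ℝ} {N t k : ℕ}

lemma NBw_facts (hα0 : 0 < α0) (hβ0 : 0 < β0) (hN : 1 ≤ N) (k : ℕ) :
    (0:ℝ) ≤ α0 + (k : ℝ) ∧ (0:ℝ) ≤ ((N : ℝ) - 1) * (α0 + (k : ℝ)) := by
  have h1 : (1:ℝ) ≤ (N : ℝ) := by exact_mod_cast hN
  have h2 : (0:ℝ) < α0 + (k : ℝ) := by positivity
  constructor
  · exact h2.le
  · apply mul_nonneg <;> linarith

lemma EZK_nonneg (hα0 : 0 < α0) (hβ0 : 0 < β0) (hN : 1 ≤ N) {f : ℕ → ℕ → ℝ}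
    (hf : ∀ z κ, 0 ≤ f z κ) : 0 ≤ EZK α0 β0 N t k f := by
  obtain ⟨h1, h2⟩ := NBw_facts hα0 hβ0 hN k (N := N)
  have hp0 := pt_pos hβ0 N t
  have hp1 := pt_lt_one hβ0 N t
  exact tsum_nonneg fun z => tsum_nonneg fun κ =>
    mul_nonneg (mul_nonneg (NB_nonneg h1 hp0 hp1 z) (NB_nonneg h2 hp0 hp1 κ)) (hf z κ)

lemma EZK_le_const (hα0 : 0 < α0) (hβ0 : 0 < β0) (hN : 1 ≤ N) {f : ℕ → ℕ → ℝ} {M : ℝ}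
    (hf0 : ∀ z κ, 0 ≤ f z κ) (hfM : ∀ z κ, f z κ ≤ M) (hM0 : 0 ≤ M) :
    EZK α0 β0 N t k f ≤ M := by
  obtain ⟨h1, h2⟩ := NBw_facts hα0 hβ0 hN k (N := N)
  have hp0 := pt_pos hβ0 N t
  have hp1 := pt_lt_one hβ0 N t
  exact tsum2_le_const (NB_nonneg h1 hp0 hp1) (NB_nonneg h2 hp0 hp1)
    (NB_summable h1 hp0 hp1) (NB_summable h2 hp0 hp1)
    (NB_tsum_le_one h1 hp0 hp1) (NB_tsum_le_one h2 hp0 hp1) hf0 hfM hM0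

lemma EZK_mono (hα0 : 0 < α0) (hβ0 : 0 < β0) (hN : 1 ≤ N) {f g : ℕ → ℕ → ℝ} {M : ℝ}
    (hf0 : ∀ z κ, 0 ≤ f z κ) (hfg : ∀ z κ, f z κ ≤ g z κ) (hgM : ∀ z κ, g z κ ≤ M) :
    EZK α0 β0 N t k f ≤ EZK α0 β0 N t k g := by
  obtain ⟨h1, h2⟩ := NBw_facts hα0 hβ0 hN k (N := N)
  have hp0 := pt_pos hβ0 N t
  have hp1 := pt_lt_one hβ0 N t
  exact tsum2_le_tsum2 (NB_nonneg h1 hp0 hp1) (NB_nonneg h2 hp0 hp1)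
    (NB_summable h1 hp0 hp1) (NB_summable h2 hp0 hp1) hf0 hfg hgM

end EZKlem

/-- The single-system value function is non-decreasing in the deterioration level `x`. -/
theorem value_monotone_x
    (α0 β0 : ℝ) (hα0 : 0 < α0) (hβ0 : 0 < β0)
    (N T : ℕ) (hN : 1 ≤ N) (hT : 1 ≤ T)
    (ξ : ℕ) (hξ : 1 ≤ ξ)
    (cp cu : ℝ) (hcp : 0 < cp) (hcpcu : cp < cu)
    (V : ℕ → ℕ → ℕ → ℝ)
    (hVT : ∀ x k, V T x k = if ξ ≤ x then cu else 0)
    (hVfail : ∀ t, t < T → ∀ x k, ξ ≤ x →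
      V t x k = cu + EZK α0 β0 N t k (fun z κ => V (t + 1) z (k + z + κ)))
    (hVop : ∀ t, t < T → ∀ x k, x < ξ →
      V t x k =
        min (cp + EZK α0 β0 N t k (fun z κ => V (t + 1) z (k + z + κ)))
          (EZK α0 β0 N t k (fun z κ => V (t + 1) (x + z) (k + z + κ)))) :
    ∀ t ≤ T, ∀ (k : ℕ) (x x' : ℕ), x ≤ x' → V t x k ≤ V t x' k := by
  have hcu : 0 < cu := hcp.trans hcpcu
  have key : ∀ d : ℕ, ∀ t : ℕ, t + d = T →
      (∀ x k : ℕ, 0 ≤ V t x k ∧ V t x k ≤ ((d : ℝ) + 1) * cu) ∧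
      (∀ (k x x' : ℕ), x ≤ x' → V t x k ≤ V t x' k) := by
    intro d
    induction d with
    | zero =>
      intro t ht
      have ht' : t = T := by omega
      subst ht'
      constructor
      · intro x k
        rw [hVT x k]
        split_ifs with h
        · constructor
          · linarith
          · push_cast; linarith
        · constructor
          · exact le_refl 0
          · push_cast; linarith
      · intro k x x' hxx'
        rw [hVT x k, hVT x' k]
        split_ifs with h1 h2
        · exact le_refl cu
        · omega
        · linarith
        · exact le_refl 0
    | succ d ih =>
      intro t ht
      have htT : t < T := by omega
      obtain ⟨ihb, ihm⟩ := ih (t + 1) (by omega)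
      have hM0 : (0:ℝ) ≤ ((d : ℝ) + 1) * cu := by positivity
      have hA0 : ∀ k : ℕ, 0 ≤ EZK α0 β0 N t k (fun z κ => V (t + 1) z (k + z + κ)) :=
        fun k => EZK_nonneg hα0 hβ0 hN (fun z κ => (ihb _ _).1)
      have hAM : ∀ k : ℕ, EZK α0 β0 N t k (fun z κ => V (t + 1) z (k + z + κ)) ≤
          ((d : ℝ) + 1) * cu :=
        fun k => EZK_le_const hα0 hβ0 hN (fun z κ => (ihb _ _).1)
          (fun z κ => (ihb _ _).2) hM0
      constructor
      · intro x k
        by_cases hx : ξ ≤ x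
        · rw [hVfail t htT x k hx]
          constructor
          · linarith [hA0 k]
          · push_cast
            linarith [hAM k]
        · rw [hVop t htT x k (by omega)]
          have hE0 : 0 ≤ EZK α0 β0 N t k (fun z κ => V (t + 1) (x + z) (k + z + κ)) :=
            EZK_nonneg hα0 hβ0 hN (fun z κ => (ihb _ _).1)
          constructor
          · exact le_min (by linarith [hA0 k]) hE0
          · refine (min_le_left _ _).trans ?_
            push_cast
            linarith [hAM k]
      · intro k x x' hxx'
        by_cases hx : ξ ≤ x
        · rw [hVfail t htT x k hx, hVfail t htT x' k (by omega)]
        · by_cases hx' : ξ ≤ x'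
          · rw [hVop t htT x k (by omega), hVfail t htT x' k hx']
            refine (min_le_left _ _).trans ?_
            linarith [le_refl (EZK α0 β0 N t k (fun z κ => V (t + 1) z (k + z + κ)))]
          · rw [hVop t htT x k (by omega), hVop t htT x' k (by omega)]
            refine le_min (min_le_left _ _) ((min_le_right _ _).trans ?_)
            exact EZK_mono hα0 hβ0 hN (fun z κ => (ihb _ _).1)
              (fun z κ => ihm _ _ _ (by omega)) (M := ((d : ℝ) + 1) * cu)
              (fun z κ => (ihb _ _).2)
  intro t ht k x x' h
  exact (key (T - t) t (by omega)).2 k x x' h
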